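/- Let L : ℝ^{n×m} → ℝ^ℓ be linear, y ∈ image(L), X̄ a limit of global minimizers X_γ of f_γ over L^{-1}(y) as γ → 0⁺, and suppose X* ∈ L^{-1}(y) has rank r = min rank over L^{-1}(y). Then Π_{i=1}^r σ_i(X*) ≥ Π_{i=1}^r σ_i(X̄). (Direct comparison version of the convergence lemma.) -/

import Mathlib

open Matrix Filter

lemma isHerm {n m : ℕ} (X : Matrix (Fin n) (Fin m) ℝ) : (X * Xᵀ).IsHermitian := by
  have h : Xᵀ = Xᴴ := by
    ext i j
    simp [Matrix.conjTranspose_apply]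
  rw [h]
  exact Matrix.isHermitian_mul_conjTranspose_self X

/-- The singular values of `X`, in decreasing order. -/
noncomputable def singval {n m : ℕ} (X : Matrix (Fin n) (Fin m) ℝ) : Fin n → ℝ :=
  fun i => Real.sqrt
    (((isHerm X).eigenvalues ∘ Tuple.sort ((isHerm X).eigenvalues)) i.rev)

/-- `f_γ(X) = log det(X Xᵀ + γ I)`. -/
noncomputable def fgamma {n m : ℕ} (γ : ℝ) (X : Matrix (Fin n) (Fin m) ℝ) : ℝ :=
  Real.log (X * Xᵀ + γ • (1 : Matrix (Fin n) (Fin n) ℝ)).det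

/-! ### Auxiliary machinery -/

/-- Eigenvalues of `X Xᵀ`. -/
noncomputable abbrev eig {n m : ℕ} (X : Matrix (Fin n) (Fin m) ℝ) : Fin n → ℝ :=
  (isHerm X).eigenvalues

lemma psdXXT {n m : ℕ} (X : Matrix (Fin n) (Fin m) ℝ) : (X * Xᵀ).PosSemidef := by
  have h : Xᵀ = Xᴴ := by
    ext i j
    simp [Matrix.conjTranspose_apply]
  rw [h]
  exact Matrix.posSemidef_self_mul_conjTranspose X

lemma eig_nonneg {n m : ℕ} (X : Matrix (Fin n) (Fin m) ℝ) (i : Fin n) : 0 ≤ eig X i :=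
  (psdXXT X).eigenvalues_nonneg i

lemma det_add_smul {n m : ℕ} (X : Matrix (Fin n) (Fin m) ℝ) (γ : ℝ) :
    (X * Xᵀ + γ • (1 : Matrix (Fin n) (Fin n) ℝ)).det = ∏ i, (eig X i + γ) := by
  have hA := isHerm X
  set U : Matrix (Fin n) (Fin n) ℝ := (hA.eigenvectorUnitary : Matrix (Fin n) (Fin n) ℝ) with hUdef
  have hU : U * star U = 1 := Matrix.mem_unitaryGroup_iff.mp hA.eigenvectorUnitary.2
  have hdiag : Matrix.diagonal (RCLike.ofReal ∘ hA.eigenvalues) = Matrix.diagonal (eig X) := by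
    congr 1
  have hd : Matrix.diagonal (fun i => eig X i + γ)
      = Matrix.diagonal (eig X) + γ • (1 : Matrix (Fin n) (Fin n) ℝ) := by
    rw [Matrix.smul_one_eq_diagonal, Matrix.diagonal_add]
  have h1 : X * Xᵀ + γ • (1 : Matrix (Fin n) (Fin n) ℝ)
      = U * Matrix.diagonal (fun i => eig X i + γ) * star U := by
    rw [hd, Matrix.mul_add, Matrix.add_mul, Matrix.mul_smul, Matrix.mul_one, Matrix.smul_mul, hU]
    congr 1
    · conv_lhs => rw [hA.spectral_theorem]
      rw [hdiag, Unitary.conjStarAlgAut_apply]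
  rw [h1, Matrix.det_mul_right_comm, hU, one_mul, Matrix.det_diagonal]

lemma det_pos_of_pos {n m : ℕ} (X : Matrix (Fin n) (Fin m) ℝ) {γ : ℝ} (hγ : 0 < γ) :
    0 < (X * Xᵀ + γ • (1 : Matrix (Fin n) (Fin n) ℝ)).det := by
  rw [det_add_smul]
  exact Finset.prod_pos fun i _ => add_pos_of_nonneg_of_pos (eig_nonneg X i) hγ

lemma det_expand {n m : ℕ} (X : Matrix (Fin n) (Fin m) ℝ) (γ : ℝ) :
    (X * Xᵀ + γ • (1 : Matrix (Fin n) (Fin n) ℝ)).det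
      = ∑ S ∈ (Finset.univ : Finset (Fin n)).powerset,
          (∏ i ∈ S, eig X i) * γ ^ (n - S.card) := by
  rw [det_add_smul, Finset.prod_add]
  refine Finset.sum_congr rfl fun S hS => ?_
  rw [Finset.prod_const, Finset.card_sdiff_of_subset (Finset.mem_powerset.mp hS), Finset.card_univ,
    Fintype.card_fin]

/-- The `r`-th elementary symmetric function of the eigenvalues of `X Xᵀ`. -/
noncomputable def cr {n m : ℕ} (r : ℕ) (X : Matrix (Fin n) (Fin m) ℝ) : ℝ :=
  ∑ S ∈ Finset.powersetCard r (Finset.univ : Finset (Fin n)), ∏ i ∈ S, eig X i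

lemma cr_eq_sum_det {n m : ℕ} {r : ℕ} (hrn : r ≤ n) (X : Matrix (Fin n) (Fin m) ℝ) :
    cr r X = ∑ j ∈ Finset.range (n+1),
      (X * Xᵀ + (j:ℝ) • (1 : Matrix (Fin n) (Fin n) ℝ)).det *
        ((Lagrange.basis (Finset.range (n+1)) (Nat.cast : ℕ → ℝ) j).coeff (n - r)) := by
  classical
  set q : Polynomial ℝ :=
    ∑ S ∈ (Finset.univ : Finset (Fin n)).powerset,
      Polynomial.C (∏ i ∈ S, eig X i) * Polynomial.X ^ (n - S.card) with hq
  have hinj : Set.InjOn (Nat.cast : ℕ → ℝ) (Finset.range (n+1)) :=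
    fun a _ b _ h => Nat.cast_injective h
  have hdeg : q.degree < (Finset.range (n+1)).card := by
    rw [Finset.card_range]
    refine lt_of_le_of_lt (Polynomial.degree_sum_le _ _) ?_
    rw [Finset.sup_lt_iff (by exact_mod_cast WithBot.bot_lt_coe (n+1))]
    intro S hS
    refine lt_of_le_of_lt (Polynomial.degree_C_mul_X_pow_le _ _) ?_
    exact_mod_cast Nat.lt_succ_of_le (Nat.sub_le n _)
  have heval : ∀ t : ℝ, q.eval t = (X * Xᵀ + t • (1 : Matrix (Fin n) (Fin n) ℝ)).det := by
    intro t
    rw [det_expand, hq, Polynomial.eval_finset_sum]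
    simp [Polynomial.eval_prod]
  have hq_interp : q = Lagrange.interpolate (Finset.range (n+1)) (Nat.cast : ℕ → ℝ)
      (fun j => (X * Xᵀ + (j:ℝ) • (1 : Matrix (Fin n) (Fin n) ℝ)).det) :=
    Lagrange.eq_interpolate_of_eval_eq _ hinj hdeg (fun j _ => heval _)
  have hcoeff : q.coeff (n - r) = cr r X := by
    rw [hq, Polynomial.finset_sum_coeff]
    simp only [Polynomial.coeff_C_mul, Polynomial.coeff_X_pow]
    rw [cr, Finset.powersetCard_eq_filter, Finset.sum_filter]
    refine Finset.sum_congr rfl fun S hS => ?_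
    have hcard : S.card ≤ n := by
      have := Finset.card_le_card (Finset.mem_powerset.mp hS)
      simpa using this
    by_cases h : S.card = r
    · simp [h]
    · have h1 : ¬ (n - r = n - S.card) := by omega
      simp [h, h1]
  rw [← hcoeff, hq_interp, Lagrange.interpolate_apply, Polynomial.finset_sum_coeff]
  simp [Polynomial.coeff_C_mul, mul_comm]

lemma continuous_cr {n m : ℕ} {r : ℕ} (hrn : r ≤ n) :
    Continuous (fun X : Matrix (Fin n) (Fin m) ℝ => cr r X) := by
  have h : (fun X : Matrix (Fin n) (Fin m) ℝ => cr r X)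
      = fun X => ∑ j ∈ Finset.range (n+1),
          (X * Xᵀ + (j:ℝ) • (1 : Matrix (Fin n) (Fin n) ℝ)).det *
            ((Lagrange.basis (Finset.range (n+1)) (Nat.cast : ℕ → ℝ) j).coeff (n - r)) :=
    funext (cr_eq_sum_det hrn)
  rw [h]
  refine continuous_finset_sum _ fun j _ => ?_
  exact (Continuous.matrix_det
    ((continuous_id.matrix_mul continuous_id.matrix_transpose).add continuous_const)).mul
    continuous_const

lemma sorted_zero {n : ℕ} (f : Fin n → ℝ) (hf : ∀ i, 0 ≤ f i) (r : ℕ)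
    (hcount : (Finset.univ.filter (fun i => f i ≠ 0)).card = r)
    (j : Fin n) (hj : (j : ℕ) < n - r) : f (Tuple.sort f j) = 0 := by
  by_contra h0
  have hpos : 0 < f (Tuple.sort f j) := (hf _).lt_of_ne (Ne.symm h0)
  have hsub : Finset.Ici j ⊆ Finset.univ.filter (fun j' => f (Tuple.sort f j') ≠ 0) := by
    intro j' hj'
    refine Finset.mem_filter.mpr ⟨Finset.mem_univ _, ?_⟩
    have hmono := Tuple.monotone_sort f (Finset.mem_Ici.mp hj')
    simp only [Function.comp_apply] at hmono
    exact ne_of_gt (lt_of_lt_of_le hpos hmono)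
  have h1 : n - (j:ℕ) ≤ (Finset.univ.filter (fun j' => f (Tuple.sort f j') ≠ 0)).card := by
    have := Finset.card_le_card hsub
    rwa [Fin.card_Ici] at this
  have h2 : (Finset.univ.filter (fun j' => f (Tuple.sort f j') ≠ 0)).card
      = (Finset.univ.filter (fun i => f i ≠ 0)).card := by
    refine Finset.card_bij (fun j' _ => Tuple.sort f j') ?_ ?_ ?_
    · intro a ha
      simp only [Finset.mem_filter, Finset.mem_univ, true_and] at ha ⊢
      exact ha
    · intro a _ b _ hab
      exact (Tuple.sort f).injective hab
    · intro b hb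
      refine ⟨(Tuple.sort f).symm b, ?_, by simp⟩
      simp only [Finset.mem_filter, Finset.mem_univ, true_and, Equiv.apply_symm_apply] at hb ⊢
      exact hb
  have hjn : (j:ℕ) < n := j.isLt
  omega

lemma prod_sqrt {ι : Type*} (s : Finset ι) (f : ι → ℝ) (hf : ∀ i ∈ s, 0 ≤ f i) :
    Real.sqrt (∏ i ∈ s, f i) = ∏ i ∈ s, Real.sqrt (f i) := by
  induction s using Finset.cons_induction with
  | empty => simp
  | cons a s ha ih =>
    rw [Finset.prod_cons, Finset.prod_cons,
      Real.sqrt_mul (hf a (Finset.mem_cons_self a s)),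
      ih (fun i hi => hf i (Finset.mem_cons.mpr (Or.inr hi)))]

/-- Direct comparison: any rank-`r` solution `X*` of `L(X) = y` has
`∏_{i=1}^r σ_i(X*) ≥ ∏_{i=1}^r σ_i(X̄)` where `X̄` is a limit of global
minimizers of `f_γ` over `L⁻¹(y)` as `γ → 0⁺` and `r` is the minimal rank. -/
theorem prod_singval_limit_le {n m l : ℕ} (hnm : n ≤ m)
    (L : Matrix (Fin n) (Fin m) ℝ →ₗ[ℝ] (Fin l → ℝ)) (y : Fin l → ℝ)
    (r : ℕ) (hr : IsLeast {k : ℕ | ∃ X, L X = y ∧ X.rank = k} r)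
    (Xγ : ℝ → Matrix (Fin n) (Fin m) ℝ)
    (hmin : ∀ γ : ℝ, 0 < γ →
      L (Xγ γ) = y ∧ ∀ X, L X = y → fgamma γ (Xγ γ) ≤ fgamma γ X)
    (Xbar : Matrix (Fin n) (Fin m) ℝ)
    (hlim : Tendsto Xγ (nhdsWithin 0 (Set.Ioi 0)) (nhds Xbar))
    (Xstar : Matrix (Fin n) (Fin m) ℝ) (hXstar : L Xstar = y)
    (hrank : Xstar.rank = r) :
    (∏ i ∈ Finset.univ.filter (fun i : Fin n => (i : ℕ) < r), singval Xbar i)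
      ≤ ∏ i ∈ Finset.univ.filter (fun i : Fin n => (i : ℕ) < r), singval Xstar i := by
  classical
  have hrn : r ≤ n := by
    rw [← hrank]; exact Matrix.rank_le_height Xstar
  set F : Finset (Fin n) := Finset.univ.filter (fun i : Fin n => (i : ℕ) < r) with hF
  -- cardinality of F
  have hcardF : F.card = r := by
    have himg : F = Finset.image (fun i : Fin r => Fin.castLE hrn i) Finset.univ := by
      ext k
      simp only [hF, Finset.mem_filter, Finset.mem_univ, true_and, Finset.mem_image]
      constructor
      · intro hk
        exact ⟨⟨(k : ℕ), hk⟩, by ext; simp⟩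
      · rintro ⟨i, rfl⟩
        simpa using i.isLt
    rw [himg, Finset.card_image_of_injective _ (Fin.castLE_injective hrn), Finset.card_univ,
      Fintype.card_fin]
  -- count of nonzero eigenvalues of Xstar
  have hcount : (Finset.univ.filter (fun i => eig Xstar i ≠ 0)).card = r := by
    have h1 := (isHerm Xstar).rank_eq_card_non_zero_eigs
    rw [Matrix.rank_self_mul_transpose, hrank, Fintype.card_subtype] at h1
    exact h1.symm
  -- the top-r index sets
  have hinj : ∀ X : Matrix (Fin n) (Fin m) ℝ,
      Function.Injective (fun i : Fin n => Tuple.sort (eig X) i.rev) := by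
    intro X a b hab
    exact Fin.rev_injective ((Tuple.sort (eig X)).injective hab)
  set T : Matrix (Fin n) (Fin m) ℝ → Finset (Fin n) :=
    fun X => Finset.image (fun i : Fin n => Tuple.sort (eig X) i.rev) F with hT
  have hcardT : ∀ X, (T X).card = r := by
    intro X
    rw [hT, Finset.card_image_of_injective _ (hinj X), hcardF]
  have hmemT : ∀ X, T X ∈ Finset.powersetCard r (Finset.univ : Finset (Fin n)) := by
    intro X
    exact Finset.mem_powersetCard.mpr ⟨Finset.subset_univ _, hcardT X⟩
  -- products over sorted top-r indices
  have hPT : ∀ X : Matrix (Fin n) (Fin m) ℝ,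
      ∏ i ∈ F, eig X (Tuple.sort (eig X) i.rev) = ∏ k ∈ T X, eig X k := by
    intro X
    rw [hT, Finset.prod_image (fun a _ b _ h => hinj X h)]
  -- step 4: P Xbar ≤ cr r Xbar
  have h4 : ∏ k ∈ T Xbar, eig Xbar k ≤ cr r Xbar := by
    refine Finset.single_le_sum (f := fun S => ∏ i ∈ S, eig Xbar i) ?_ (hmemT Xbar)
    intro S _
    exact Finset.prod_nonneg fun i _ => eig_nonneg _ i
  -- zero products for large sets
  have hzero_of : ∀ S : Finset (Fin n), r < S.card → ∏ i ∈ S, eig Xstar i = 0 := by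
    intro S hS
    obtain ⟨i, hiS, hi0⟩ : ∃ i ∈ S, eig Xstar i = 0 := by
      by_contra hno
      push_neg at hno
      have hsub : S ⊆ Finset.univ.filter (fun i => eig Xstar i ≠ 0) :=
        fun i hi => Finset.mem_filter.mpr ⟨Finset.mem_univ _, hno i hi⟩
      have := Finset.card_le_card hsub
      rw [hcount] at this
      omega
    exact Finset.prod_eq_zero hiS hi0
  -- step 5: the analytic comparison
  set hfun : ℝ → ℝ := fun γ => ∑ S ∈ (Finset.univ : Finset (Fin n)).powerset,
      (∏ i ∈ S, eig Xstar i) * γ ^ (r - S.card) with hfdef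
  have key : ∀ γ : ℝ, 0 < γ → cr r (Xγ γ) ≤ hfun γ := by
    intro γ hγ
    have hd1 : (Xγ γ * (Xγ γ)ᵀ + γ • (1 : Matrix (Fin n) (Fin n) ℝ)).det
        ≤ (Xstar * Xstarᵀ + γ • (1 : Matrix (Fin n) (Fin n) ℝ)).det := by
      have hlog := (hmin γ hγ).2 Xstar hXstar
      rw [fgamma, fgamma] at hlog
      exact (Real.log_le_log_iff (det_pos_of_pos _ hγ) (det_pos_of_pos _ hγ)).mp hlog
    have h2 : cr r (Xγ γ) * γ ^ (n - r)
        ≤ (Xγ γ * (Xγ γ)ᵀ + γ • (1 : Matrix (Fin n) (Fin n) ℝ)).det := by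
      rw [det_expand, cr, Finset.sum_mul]
      have hsub : Finset.powersetCard r (Finset.univ : Finset (Fin n))
          ⊆ (Finset.univ : Finset (Fin n)).powerset :=
        fun S hS => Finset.mem_powerset.mpr (Finset.mem_powersetCard.mp hS).1
      have hcongr : ∀ S ∈ Finset.powersetCard r (Finset.univ : Finset (Fin n)),
          (∏ i ∈ S, eig (Xγ γ) i) * γ ^ (n - r)
            = (∏ i ∈ S, eig (Xγ γ) i) * γ ^ (n - S.card) := by
        intro S hS
        rw [(Finset.mem_powersetCard.mp hS).2]
      rw [Finset.sum_congr rfl hcongr]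
      refine Finset.sum_le_sum_of_subset_of_nonneg hsub ?_
      intro S _ _
      exact mul_nonneg (Finset.prod_nonneg fun i _ => eig_nonneg _ i) (le_of_lt (pow_pos hγ _))
    have h3 : (Xstar * Xstarᵀ + γ • (1 : Matrix (Fin n) (Fin n) ℝ)).det
        = hfun γ * γ ^ (n - r) := by
      rw [det_expand, hfdef, Finset.sum_mul]
      refine Finset.sum_congr rfl fun S hS => ?_
      have hcard : S.card ≤ n := by
        have := Finset.card_le_card (Finset.mem_powerset.mp hS)
        simpa using this
      by_cases hc : S.card ≤ r
      · rw [mul_assoc, ← pow_add]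
        congr 2
        omega
      · rw [hzero_of S (by omega)]
        simp
    have hchain : cr r (Xγ γ) * γ ^ (n - r) ≤ hfun γ * γ ^ (n - r) :=
      le_trans h2 (le_of_le_of_eq hd1 h3)
    exact le_of_mul_le_mul_right hchain (pow_pos hγ _)
  have ht1 : Tendsto (fun γ => cr r (Xγ γ)) (nhdsWithin 0 (Set.Ioi 0)) (nhds (cr r Xbar)) :=
    ((continuous_cr hrn).tendsto Xbar).comp hlim
  have ht2 : Tendsto hfun (nhdsWithin 0 (Set.Ioi 0)) (nhds (hfun 0)) := by
    have hc : Continuous hfun := by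
      rw [hfdef]
      exact continuous_finset_sum _ fun S _ => continuous_const.mul (continuous_pow _)
    exact (hc.tendsto 0).mono_left nhdsWithin_le_nhds
  have hfun0 : hfun 0 = cr r Xstar := by
    rw [hfdef, cr, Finset.powersetCard_eq_filter, Finset.sum_filter]
    refine Finset.sum_congr rfl fun S hS => ?_
    by_cases h : S.card = r
    · simp [h]
    · by_cases h2 : S.card < r
      · rw [if_neg h, zero_pow (by omega : r - S.card ≠ 0), mul_zero]
      · rw [if_neg h, hzero_of S (by omega), zero_mul]
  have h5 : cr r Xbar ≤ cr r Xstar := by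
    rw [← hfun0]
    refine le_of_tendsto_of_tendsto ht1 ht2 ?_
    filter_upwards [self_mem_nhdsWithin] with γ hγ using key γ hγ
  -- step 6 : cr r Xstar is exactly the product over its top-r indices
  have h6 : cr r Xstar = ∏ k ∈ T Xstar, eig Xstar k := by
    refine Finset.sum_eq_single_of_mem (T Xstar) (hmemT Xstar) ?_
    intro S hS hne
    have hST : ¬ S ⊆ T Xstar := by
      intro hsubs
      exact hne (Finset.eq_of_subset_of_card_le hsubs
        (by rw [hcardT, (Finset.mem_powersetCard.mp hS).2]))
    obtain ⟨k, hkS, hkT⟩ := Finset.not_subset.mp hST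
    refine Finset.prod_eq_zero hkS ?_
    set σ := Tuple.sort (eig Xstar) with hσ
    have hklt : ((σ.symm k : Fin n) : ℕ) < n - r := by
      by_contra hge
      push_neg at hge
      apply hkT
      rw [hT]
      refine Finset.mem_image.mpr ⟨(σ.symm k).rev, ?_, ?_⟩
      · simp only [hF, Finset.mem_filter, Finset.mem_univ, true_and, Fin.val_rev]
        have h1 : ((σ.symm k : Fin n) : ℕ) < n := (σ.symm k).isLt
        omega
      · show σ ((σ.symm k).rev).rev = k
        rw [Fin.rev_rev]
        exact σ.apply_symm_apply k
    have hz := sorted_zero (eig Xstar) (eig_nonneg Xstar) r hcount (σ.symm k) hklt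
    rwa [σ.apply_symm_apply] at hz
  -- final assembly via square roots
  have hsing : ∀ X : Matrix (Fin n) (Fin m) ℝ,
      ∏ i ∈ F, singval X i = Real.sqrt (∏ k ∈ T X, eig X k) := by
    intro X
    rw [← hPT, prod_sqrt _ _ (fun i _ => eig_nonneg _ _)]
    exact Finset.prod_congr rfl fun i _ => rfl
  rw [hsing Xbar, hsing Xstar]
  exact Real.sqrt_le_sqrt (h4.trans (h5.trans (le_of_eq h6)))
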